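/- Let X be a Banach space, f : X → ℝ ∪ {+∞} convex lower semicontinuous, x̄ ∈ [f ≤ 0], τ > 0 and δ ∈ (0, ∞]. If d(0, ∂f(x)) ≥ τ for all x ∈ B_δ(x̄) with f(x) > 0 and f(x) < τ d(x, [f ≤ 0]), then for every α ∈ (0,1] and every x ∈ B_{δ/(1+α)}(x̄) one has α τ d(x, [f ≤ 0]) ≤ f₊(x). -/

import Mathlib

open EMetric ENNReal

/-- Convexity for an `EReal`-valued function (modelling `f : X → ℝ ∪ {+∞}`). -/
def EConvexOn {X : Type*} [NormedAddCommGroup X] [NormedSpace ℝ X]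
    (f : X → EReal) : Prop :=
  ∀ u v : X, ∀ t : ℝ, 0 ≤ t → t ≤ 1 →
    f (t • u + (1 - t) • v) ≤ (t : EReal) * f u + ((1 - t : ℝ) : EReal) * f v

/-- The (convex) subdifferential of `f` at `x`. -/
def ESubdiff {X : Type*} [NormedAddCommGroup X] [NormedSpace ℝ X]
    (f : X → EReal) (x : X) : Set (X →L[ℝ] ℝ) :=
  {g | ∀ u : X, ((g (u - x) : ℝ) : EReal) ≤ f u - f x}

/-- The "positive part" of an extended real, as an element of `[0, +∞]`. -/
noncomputable def EReal.toENN (a : EReal) : ℝ≥0∞ :=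
  if a = ⊤ then ⊤ else ENNReal.ofReal a.toReal

/-- `d(0, ∂f(x)) = inf {‖x*‖ : x* ∈ ∂f(x)}`, `+∞` if `∂f(x) = ∅`. -/
noncomputable def dSub {X : Type*} [NormedAddCommGroup X] [NormedSpace ℝ X]
    (f : X → EReal) (x : X) : ℝ≥0∞ :=
  ⨅ g ∈ ESubdiff f x, ENNReal.ofReal ‖g‖

lemma toENN_of_ne_top' {a : EReal} (h : a ≠ ⊤) : a.toENN = ENNReal.ofReal a.toReal := by
  simp [EReal.toENN, h]

lemma lsc_toENN {Y : Type*} [TopologicalSpace Y] {f : Y → EReal} (hf : LowerSemicontinuous f) :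
    LowerSemicontinuous (fun u => (f u).toENN) := by
  intro u c hc
  change c < (f u).toENN at hc
  have hcne : c ≠ ⊤ := hc.ne_top
  have hlt : ((c.toReal : ℝ) : EReal) < f u := by
    rcases eq_or_ne (f u) ⊤ with h | h
    · rw [h]; exact EReal.coe_lt_top _
    · have hbot : f u ≠ ⊥ := by
        intro hb
        rw [toENN_of_ne_top' h, hb] at hc
        simp at hc
      rw [toENN_of_ne_top' h] at hc
      have := (ENNReal.lt_ofReal_iff_toReal_lt hcne).1 hc
      calc ((c.toReal : ℝ) : EReal) < ((f u).toReal : EReal) := by exact_mod_cast this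
        _ = f u := EReal.coe_toReal h hbot
  refine (hf u _ hlt).mono fun v hv => ?_
  show c < (f v).toENN
  replace hv : ((c.toReal : ℝ) : EReal) < f v := hv
  rcases eq_or_ne (f v) ⊤ with h | h
  · simp [EReal.toENN, h, hcne.lt_top]
  · have hvbot : f v ≠ ⊥ := fun hb => by rw [hb] at hv; exact (not_lt_of_ge bot_le hv)
    rw [toENN_of_ne_top' h]
    have h1 : c.toReal < (f v).toReal := by
      have := EReal.toReal_le_toReal hv.le (EReal.coe_ne_bot _) h
      rw [EReal.toReal_coe] at this
      rcases lt_or_eq_of_le this with h2 | h2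
      · exact h2
      · exfalso
        rw [← EReal.coe_toReal h hvbot, ← h2] at hv
        exact lt_irrefl _ hv
    calc c = ENNReal.ofReal c.toReal := (ENNReal.ofReal_toReal hcne).symm
      _ < ENNReal.ofReal (f v).toReal :=
        (ENNReal.ofReal_lt_ofReal_iff (lt_of_le_of_lt ENNReal.toReal_nonneg h1)).2 h1

lemma evp {Y : Type*} [EMetricSpace Y] [CompleteSpace Y] (G : Y → ℝ≥0∞)
    (hG : LowerSemicontinuous G) (x₀ : Y) (h₀ : G x₀ ≠ ⊤) (c : ℝ≥0∞)
    (hc0 : c ≠ 0) (hct : c ≠ ⊤) :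
    ∃ y, G y + c * edist y x₀ ≤ G x₀ ∧ ∀ u, G y ≤ G u + c * edist u y := by
  classical
  set T : Y → Set Y := fun z => {u | G u + c * edist u z ≤ G z} with hT
  have hself : ∀ z, z ∈ T z := fun z => by simp [hT]
  have hmono : ∀ z u, u ∈ T z → T u ⊆ T z := by
    intro z u hu w hw
    have h1 : G w + c * edist w u ≤ G u := hw
    have h2 : G u + c * edist u z ≤ G z := hu
    show G w + c * edist w z ≤ G z
    calc G w + c * edist w z ≤ G w + c * (edist w u + edist u z) := by
          gcongr; exact edist_triangle _ _ _
      _ = (G w + c * edist w u) + c * edist u z := by ring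
      _ ≤ G u + c * edist u z := by gcongr
      _ ≤ G z := h2
  have hclosed : ∀ z, IsClosed (T z) := by
    intro z
    have hcont : Continuous fun u : Y => c * edist u z :=
      (ENNReal.continuous_const_mul hct).comp (continuous_id.edist continuous_const)
    have : LowerSemicontinuous fun u => G u + c * edist u z :=
      hG.add hcont.lowerSemicontinuous
    exact this.isClosed_preimage (G z)
  have key : ∀ z, G z ≠ ⊤ → ∀ n : ℕ, ∃ u, u ∈ T z ∧ ∀ w ∈ T z, G u ≤ G w + 2⁻¹ ^ n := by
    intro z hz n
    have hpow : (2⁻¹ : ℝ≥0∞) ^ n ≠ 0 :=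
      pow_ne_zero _ (ENNReal.inv_ne_zero.2 (by norm_num))
    have hsle : sInf (G '' T z) ≤ G z := sInf_le ⟨z, hself z, rfl⟩
    have hlt : sInf (G '' T z) < sInf (G '' T z) + 2⁻¹ ^ n :=
      ENNReal.lt_add_right (ne_top_of_le_ne_top hz hsle) hpow
    have hex : ∃ b ∈ G '' T z, b < sInf (G '' T z) + 2⁻¹ ^ n := sInf_lt_iff.1 hlt
    obtain ⟨b, hbmem, hb⟩ := hex
    obtain ⟨u, hu, rfl⟩ := hbmem
    refine ⟨u, hu, fun w hw => ?_⟩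
    exact le_trans hb.le (add_le_add_left (sInf_le (Set.mem_image_of_mem G hw)) _)
  choose! g hg1 hg2 using key
  set x : ℕ → Y := fun n => Nat.rec x₀ (fun n z => g z n) n with hx
  have hx0 : x 0 = x₀ := rfl
  have hxs : ∀ n, x (n + 1) = g (x n) n := fun n => rfl
  have htop : ∀ n, G (x n) ≠ ⊤ ∧ x (n + 1) ∈ T (x n) := by
    intro n
    induction n with
    | zero => exact ⟨h₀, by rw [hxs]; exact hg1 x₀ h₀ 0⟩
    | succ n ih =>
      have hle : G (x (n + 1)) ≤ G (x n) := le_trans le_self_add ih.2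
      have h1 : G (x (n + 1)) ≠ ⊤ := ne_top_of_le_ne_top ih.1 hle
      exact ⟨h1, by rw [hxs]; exact hg1 _ h1 _⟩
  have hnest : ∀ n m, n ≤ m → x m ∈ T (x n) := by
    intro n m h
    induction m, h using Nat.le_induction with
    | base => exact hself _
    | succ m hm ih => exact hmono _ _ ih (htop m).2
  have hGle : ∀ n, G (x n) ≤ G x₀ := by
    intro n
    have := hnest 0 n (Nat.zero_le n)
    rw [hx0] at this
    exact le_trans le_self_add this
  have hdist : ∀ n m, n + 1 ≤ m → c * edist (x m) (x (n + 1)) ≤ 2⁻¹ ^ n := by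
    intro n m h
    have h1 : G (x m) + c * edist (x m) (x (n + 1)) ≤ G (x (n + 1)) := hnest _ _ h
    have h2 : x m ∈ T (x n) := hnest _ _ (le_trans (Nat.le_succ n) h)
    have h3 : G (x (n + 1)) ≤ G (x m) + 2⁻¹ ^ n := by
      rw [hxs]; exact hg2 (x n) (htop n).1 n (x m) h2
    have hGm : G (x m) ≠ ⊤ := ne_top_of_le_ne_top h₀ (hGle m)
    exact (ENNReal.add_le_add_iff_left hGm).1 (h1.trans h3)
  have hcauchy : CauchySeq x := by
    refine EMetric.cauchySeq_iff'.2 fun ε hε => ?_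
    obtain ⟨n₁, hn₁⟩ := ENNReal.exists_inv_two_pow_lt (mul_ne_zero hc0 hε.ne')
    refine ⟨n₁ + 1, fun m hm => ?_⟩
    have h1 : c * edist (x m) (x (n₁ + 1)) < c * ε := lt_of_le_of_lt (hdist n₁ m hm) hn₁
    exact (ENNReal.mul_lt_mul_iff_right hc0 hct).1 h1
  obtain ⟨y, hy⟩ := cauchySeq_tendsto_of_complete hcauchy
  have hyT : ∀ n, y ∈ T (x n) := fun n =>
    (hclosed (x n)).mem_of_tendsto hy
      (Filter.eventually_atTop.2 ⟨n, fun m hm => hnest n m hm⟩)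
  have hGy : G y ≠ ⊤ := by
    have := hyT 0
    rw [hx0] at this
    exact ne_top_of_le_ne_top h₀ (le_trans le_self_add this)
  refine ⟨y, by have := hyT 0; rwa [hx0] at this, ?_⟩
  intro u
  by_contra hcon
  push_neg at hcon
  have hGu : G u ≠ ⊤ :=
    ne_top_of_le_ne_top hGy (le_trans le_self_add hcon.le)
  have huy : edist u y ≠ 0 := by
    intro h
    have heq : u = y := edist_eq_zero.1 h
    rw [h, mul_zero, add_zero, heq] at hcon
    exact lt_irrefl _ hcon
  have hce : c * edist u y ≠ 0 := mul_ne_zero hc0 huy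
  obtain ⟨n₁, hn₁⟩ := ENNReal.exists_inv_two_pow_lt hce
  have humem : ∀ n, u ∈ T (x n) := by
    intro n
    have h1 : G y + c * edist y (x n) ≤ G (x n) := hyT n
    show G u + c * edist u (x n) ≤ G (x n)
    calc G u + c * edist u (x n) ≤ G u + c * (edist u y + edist y (x n)) := by
          gcongr; exact edist_triangle _ _ _
      _ = (G u + c * edist u y) + c * edist y (x n) := by ring
      _ ≤ G y + c * edist y (x n) := add_le_add_left hcon.le _
      _ ≤ G (x n) := h1
  have hev := hy.eventually (hG y _ hcon)
  obtain ⟨N, hN⟩ := Filter.eventually_atTop.1 hev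
  set n := max N n₁ with hn
  have h2 : G u + c * edist u y < G (x (n + 1)) :=
    hN (n + 1) (le_trans (le_max_left _ _) (Nat.le_succ n))
  have h3 : G (x (n + 1)) ≤ G u + 2⁻¹ ^ n := by
    rw [hxs]; exact hg2 (x n) (htop n).1 n u (humem n)
  have h4 : c * edist u y < 2⁻¹ ^ n := (ENNReal.add_lt_add_iff_left hGu).1 (h2.trans_le h3)
  have h5 : (2⁻¹ : ℝ≥0∞) ^ n ≤ 2⁻¹ ^ n₁ :=
    pow_le_pow_of_le_one zero_le (ENNReal.inv_le_one.2 one_le_two) (le_max_right _ _)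
  exact absurd (h4.trans_le h5) (not_lt.2 hn₁.le)

lemma ofReal_max0 (a : ℝ) : ENNReal.ofReal a = ENNReal.ofReal (max a 0) := by
  rcases le_total a 0 with h | h
  · rw [max_eq_right h, ENNReal.ofReal_eq_zero.2 h, ENNReal.ofReal_zero]
  · rw [max_eq_left h]

lemma exists_subgrad {X : Type*} [NormedAddCommGroup X] [NormedSpace ℝ X]
    (f : X → EReal) (hbot : ∀ u, f u ≠ ⊥) (hconv : EConvexOn f)
    (y : X) (hytop : f y ≠ ⊤) (hypos : 0 < f y)
    (μ : ℝ) (hμ : 0 < μ)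
    (hmin : ∀ u, (f y).toENN ≤ (f u).toENN + ENNReal.ofReal μ * edist u y) :
    ∃ g : X →L[ℝ] ℝ, g ∈ ESubdiff f y ∧ ‖g‖ ≤ μ := by
  classical
  set Fy : ℝ := (f y).toReal with hFydef
  have hfy_eq : f y = (Fy : EReal) := (EReal.coe_toReal hytop (hbot y)).symm
  have hFypos : 0 < Fy := by
    rw [hfy_eq] at hypos
    exact_mod_cast hypos
  set gplus : X → ℝ := fun u => max (f u).toReal 0 with hgplusdef
  have hgplus_nonneg : ∀ u, 0 ≤ gplus u := fun u => le_max_right _ _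
  have hgplus_y : gplus y = Fy := max_eq_left hFypos.le
  have htoENN : ∀ u, f u ≠ ⊤ → (f u).toENN = ENNReal.ofReal (gplus u) := by
    intro u hu
    rw [toENN_of_ne_top' hu, ofReal_max0]
  -- fact1 : lower bound from the minimization property
  have hlow : ∀ v : X, f (y + v) ≠ ⊤ → Fy ≤ gplus (y + v) + μ * ‖v‖ := by
    intro v hv
    have h1 := hmin (y + v)
    rw [toENN_of_ne_top' hytop, ← hFydef, htoENN _ hv] at h1
    have hed : edist (y + v) y = ENNReal.ofReal ‖v‖ := by
      rw [edist_dist, dist_eq_norm, add_sub_cancel_left]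
    rw [hed, ← ENNReal.ofReal_mul hμ.le, ← ENNReal.ofReal_add (hgplus_nonneg _) (by positivity)]
      at h1
    exact (ENNReal.ofReal_le_ofReal_iff (by positivity)).1 h1
  -- fact2 : convexity of gplus along y
  have hcvx : ∀ v₁ v₂ : X, ∀ t : ℝ, 0 ≤ t → t ≤ 1 → f (y + v₁) ≠ ⊤ → f (y + v₂) ≠ ⊤ →
      f (y + (t • v₁ + (1 - t) • v₂)) ≠ ⊤ ∧
      gplus (y + (t • v₁ + (1 - t) • v₂)) ≤ t * gplus (y + v₁) + (1 - t) * gplus (y + v₂) := by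
    intro v₁ v₂ t ht ht1 h1 h2
    set r₁ : ℝ := (f (y + v₁)).toReal
    set r₂ : ℝ := (f (y + v₂)).toReal
    have he1 : f (y + v₁) = (r₁ : EReal) := (EReal.coe_toReal h1 (hbot _)).symm
    have he2 : f (y + v₂) = (r₂ : EReal) := (EReal.coe_toReal h2 (hbot _)).symm
    have heq : y + (t • v₁ + (1 - t) • v₂) = t • (y + v₁) + (1 - t) • (y + v₂) := by module
    have hcv := hconv (y + v₁) (y + v₂) t ht ht1
    rw [he1, he2, ← heq] at hcv
    have hcv' : f (y + (t • v₁ + (1 - t) • v₂)) ≤ ((t * r₁ + (1 - t) * r₂ : ℝ) : EReal) := by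
      refine le_trans hcv (le_of_eq ?_)
      norm_cast
    have hne : f (y + (t • v₁ + (1 - t) • v₂)) ≠ ⊤ :=
      ne_top_of_le_ne_top (EReal.coe_ne_top _) hcv'
    refine ⟨hne, ?_⟩
    have htr : (f (y + (t • v₁ + (1 - t) • v₂))).toReal ≤ t * r₁ + (1 - t) * r₂ := by
      have := EReal.toReal_le_toReal hcv' (hbot _) (EReal.coe_ne_top _)
      rwa [EReal.toReal_coe] at this
    have hg1 : r₁ ≤ gplus (y + v₁) := le_max_left _ _
    have hg2 : r₂ ≤ gplus (y + v₂) := le_max_left _ _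
    have hrhs : 0 ≤ t * gplus (y + v₁) + (1 - t) * gplus (y + v₂) := by
      have := hgplus_nonneg (y + v₁); have := hgplus_nonneg (y + v₂); nlinarith
    refine max_le ?_ hrhs
    nlinarith [mul_le_mul_of_nonneg_left hg1 ht, mul_le_mul_of_nonneg_left hg2 (by linarith : (0:ℝ) ≤ 1 - t)]
  -- the inf-convolution q
  set Qs : X → Set ℝ := fun w => {a | ∃ v, f (y + v) ≠ ⊤ ∧ a = gplus (y + v) - Fy + μ * dist w v}
    with hQsdef
  set q : X → ℝ := fun w => sInf (Qs w) with hqdef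
  have hQne : ∀ w, (Qs w).Nonempty := by
    intro w
    refine ⟨gplus (y + 0) - Fy + μ * dist w 0, 0, by simpa using hytop, rfl⟩
  have hQlb : ∀ w, ∀ a ∈ Qs w, -(μ * ‖w‖) ≤ a := by
    rintro w a ⟨v, hv, rfl⟩
    have h1 : Fy ≤ gplus (y + v) + μ * ‖v‖ := hlow v hv
    have h2 : ‖v‖ ≤ dist w v + ‖w‖ := by
      calc ‖v‖ = dist v 0 := (dist_zero_right v).symm
        _ ≤ dist v w + dist w 0 := dist_triangle _ _ _
        _ = dist w v + ‖w‖ := by rw [dist_comm, dist_zero_right]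
    nlinarith [mul_le_mul_of_nonneg_left h2 hμ.le]
  have hQbdd : ∀ w, BddBelow (Qs w) := fun w => ⟨-(μ * ‖w‖), fun a ha => hQlb w a ha⟩
  have hqle : ∀ w v, f (y + v) ≠ ⊤ → q w ≤ gplus (y + v) - Fy + μ * dist w v :=
    fun w v hv => csInf_le (hQbdd w) ⟨v, hv, rfl⟩
  have hqub : ∀ w, q w ≤ μ * ‖w‖ := by
    intro w
    have := hqle w 0 (by simpa using hytop)
    simpa [hgplus_y, dist_zero_right] using this
  have hqlb : ∀ w, -(μ * ‖w‖) ≤ q w := fun w => le_csInf (hQne w) (hQlb w)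
  have hq0 : q 0 = 0 := by
    have h1 := hqub 0
    have h2 := hqlb 0
    simp only [norm_zero, mul_zero, neg_zero] at h1 h2
    linarith
  -- convexity of q
  have hconvq : ∀ w₁ w₂ : X, ∀ t : ℝ, 0 ≤ t → t ≤ 1 →
      q (t • w₁ + (1 - t) • w₂) ≤ t * q w₁ + (1 - t) * q w₂ := by
    intro w₁ w₂ t ht ht1
    have key : ∀ a₁ ∈ Qs w₁, ∀ a₂ ∈ Qs w₂,
        q (t • w₁ + (1 - t) • w₂) ≤ t * a₁ + (1 - t) * a₂ := by
      rintro a₁ ⟨v₁, h1, rfl⟩ a₂ ⟨v₂, h2, rfl⟩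
      obtain ⟨hvt, hvg⟩ := hcvx v₁ v₂ t ht ht1 h1 h2
      have hd : dist (t • w₁ + (1 - t) • w₂) (t • v₁ + (1 - t) • v₂) ≤
          t * dist w₁ v₁ + (1 - t) * dist w₂ v₂ := by
        rw [dist_eq_norm]
        have heq2 : (t • w₁ + (1 - t) • w₂) - (t • v₁ + (1 - t) • v₂)
            = t • (w₁ - v₁) + (1 - t) • (w₂ - v₂) := by module
        rw [heq2]
        calc ‖t • (w₁ - v₁) + (1 - t) • (w₂ - v₂)‖
            ≤ ‖t • (w₁ - v₁)‖ + ‖(1 - t) • (w₂ - v₂)‖ := norm_add_le _ _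
          _ = t * dist w₁ v₁ + (1 - t) * dist w₂ v₂ := by
              rw [norm_smul, norm_smul, Real.norm_eq_abs, abs_of_nonneg ht, Real.norm_eq_abs,
                abs_of_nonneg (by linarith : (0:ℝ) ≤ 1 - t), dist_eq_norm, dist_eq_norm]
      have h3 := hqle (t • w₁ + (1 - t) • w₂) (t • v₁ + (1 - t) • v₂) hvt
      nlinarith [mul_le_mul_of_nonneg_left hd hμ.le]
    rcases eq_or_lt_of_le ht with hteq | htpos
    · rw [← hteq]
      simp
    rcases eq_or_lt_of_le ht1 with hteq1 | htlt1
    · rw [hteq1]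
      simp
    have hA : ∀ a₁ ∈ Qs w₁, q (t • w₁ + (1 - t) • w₂) ≤ t * a₁ + (1 - t) * q w₂ := by
      intro a₁ ha₁
      have h2 : ∀ a₂ ∈ Qs w₂, (q (t • w₁ + (1 - t) • w₂) - t * a₁) / (1 - t) ≤ a₂ := by
        intro a₂ ha₂
        rw [div_le_iff₀ (by linarith : (0:ℝ) < 1 - t)]
        have := key a₁ ha₁ a₂ ha₂
        linarith
      have h3 : (q (t • w₁ + (1 - t) • w₂) - t * a₁) / (1 - t) ≤ q w₂ :=
        le_csInf (hQne w₂) h2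
      rw [div_le_iff₀ (by linarith : (0:ℝ) < 1 - t)] at h3
      linarith
    have h4 : ∀ a₁ ∈ Qs w₁, (q (t • w₁ + (1 - t) • w₂) - (1 - t) * q w₂) / t ≤ a₁ := by
      intro a₁ ha₁
      rw [div_le_iff₀ htpos]
      have := hA a₁ ha₁
      linarith
    have h5 : (q (t • w₁ + (1 - t) • w₂) - (1 - t) * q w₂) / t ≤ q w₁ :=
      le_csInf (hQne w₁) h4
    rw [div_le_iff₀ htpos] at h5
    linarith
  -- monotonicity of difference quotients
  have hmonot : ∀ (w : X) (s t : ℝ), 0 < s → s ≤ t → q (s • w) / s ≤ q (t • w) / t := by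
    intro w s t hs hst
    have ht0 : 0 < t := lt_of_lt_of_le hs hst
    have h1 := hconvq (t • w) 0 (s / t) (by positivity) (by rw [div_le_one ht0]; exact hst)
    have hc : (s / t) • (t • w) + (1 - s / t) • (0 : X) = s • w := by
      rw [smul_zero, add_zero, smul_smul, div_mul_cancel₀ _ ht0.ne']
    rw [hc, hq0, mul_zero, add_zero] at h1
    rw [div_le_div_iff₀ hs ht0]
    have h2 := mul_le_mul_of_nonneg_right h1 ht0.le
    have h3 : s / t * q (t • w) * t = q (t • w) * s := by
      field_simp
    linarith
  -- the sublinear function r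
  set Rs : X → Set ℝ := fun w => {b | ∃ t : ℝ, 0 < t ∧ b = q (t • w) / t} with hRsdef
  set r : X → ℝ := fun w => sInf (Rs w) with hrdef
  have hRne : ∀ w, (Rs w).Nonempty := fun w => ⟨q ((1:ℝ) • w) / 1, 1, one_pos, rfl⟩
  have hRlb : ∀ w, ∀ b ∈ Rs w, -(μ * ‖w‖) ≤ b := by
    rintro w b ⟨t, ht, rfl⟩
    have h1 : -(μ * ‖t • w‖) ≤ q (t • w) := hqlb _
    rw [norm_smul, Real.norm_eq_abs, abs_of_pos ht] at h1
    rw [le_div_iff₀ ht]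
    nlinarith
  have hRbdd : ∀ w, BddBelow (Rs w) := fun w => ⟨-(μ * ‖w‖), fun b hb => hRlb w b hb⟩
  have hrle : ∀ (w : X) (t : ℝ), 0 < t → r w ≤ q (t • w) / t :=
    fun w t ht => csInf_le (hRbdd w) ⟨t, ht, rfl⟩
  have hrleq : ∀ w, r w ≤ q w := by
    intro w
    have h := hrle w 1 one_pos
    rwa [one_smul, div_one] at h
  have hrlb : ∀ w, -(μ * ‖w‖) ≤ r w := fun w => le_csInf (hRne w) (hRlb w)
  -- positive homogeneity
  have hom : ∀ c : ℝ, 0 < c → ∀ w, r (c • w) = c * r w := by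
    intro c hc w
    apply le_antisymm
    · have h1 : ∀ a ∈ Rs w, r (c • w) / c ≤ a := by
        rintro a ⟨t, ht, rfl⟩
        have h2 : r (c • w) ≤ q ((t / c) • (c • w)) / (t / c) := hrle _ _ (by positivity)
        rw [smul_smul, div_mul_cancel₀ _ hc.ne'] at h2
        rw [div_div_eq_mul_div] at h2
        rw [div_le_div_iff₀ hc ht]
        have h3 := (le_div_iff₀ ht).1 h2
        linarith
      have h3 : r (c • w) / c ≤ r w := le_csInf (hRne w) h1
      rw [div_le_iff₀ hc] at h3
      linarith
    · refine le_csInf (hRne (c • w)) ?_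
      rintro b ⟨s, hs, rfl⟩
      have h2 : r w ≤ q ((s * c) • w) / (s * c) := hrle _ _ (by positivity)
      rw [smul_smul]
      have hsne := hs.ne'
      have hcne := hc.ne'
      calc c * r w ≤ c * (q ((s * c) • w) / (s * c)) :=
            mul_le_mul_of_nonneg_left h2 hc.le
        _ = q ((s * c) • w) / s := by field_simp
  -- subadditivity
  have hsub : ∀ w₁ w₂, r (w₁ + w₂) ≤ r w₁ + r w₂ := by
    intro w₁ w₂
    have key2 : ∀ a₁ ∈ Rs w₁, ∀ a₂ ∈ Rs w₂, r (w₁ + w₂) ≤ a₁ + a₂ := by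
      rintro a₁ ⟨t₁, ht₁, rfl⟩ a₂ ⟨t₂, ht₂, rfl⟩
      set t : ℝ := min t₁ t₂ / 2 with htdef
      have ht : 0 < t := div_pos (lt_min ht₁ ht₂) two_pos
      have h2t1 : 2 * t ≤ t₁ := by
        have := min_le_left t₁ t₂
        rw [htdef]; linarith
      have h2t2 : 2 * t ≤ t₂ := by
        have := min_le_right t₁ t₂
        rw [htdef]; linarith
      have hcomb := hconvq ((2 * t) • w₁) ((2 * t) • w₂) (1/2) (by norm_num) (by norm_num)
      have hce : (1/2 : ℝ) • ((2 * t) • w₁) + (1 - 1/2 : ℝ) • ((2 * t) • w₂)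
          = t • (w₁ + w₂) := by module
      rw [hce] at hcomb
      have hm1 : q ((2 * t) • w₁) / (2 * t) ≤ q (t₁ • w₁) / t₁ :=
        hmonot w₁ (2 * t) t₁ (by linarith) h2t1
      have hm2 : q ((2 * t) • w₂) / (2 * t) ≤ q (t₂ • w₂) / t₂ :=
        hmonot w₂ (2 * t) t₂ (by linarith) h2t2
      have hr : r (w₁ + w₂) ≤ q (t • (w₁ + w₂)) / t := hrle _ _ ht
      rw [div_le_iff₀ (by linarith : (0:ℝ) < 2 * t)] at hm1 hm2
      have hCt : q (t • (w₁ + w₂)) / t ≤ q (t₁ • w₁) / t₁ + q (t₂ • w₂) / t₂ := by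
        rw [div_le_iff₀ ht]
        linarith
      exact hr.trans hCt
    have hA : ∀ a₁ ∈ Rs w₁, r (w₁ + w₂) - a₁ ≤ r w₂ := by
      intro a₁ ha₁
      refine le_csInf (hRne w₂) fun a₂ ha₂ => ?_
      have := key2 a₁ ha₁ a₂ ha₂
      linarith
    have hB : ∀ a₁ ∈ Rs w₁, r (w₁ + w₂) - r w₂ ≤ a₁ := by
      intro a₁ ha₁
      have := hA a₁ ha₁
      linarith
    have := le_csInf (hRne w₁) hB
    linarith
  -- Hahn–Banach extension
  have hr0 : (0:ℝ) ≤ r 0 := by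
    have := hrlb 0
    simpa using this
  obtain ⟨g, -, hg⟩ := exists_extension_of_le_sublinear ⟨⊥, 0⟩ r
    (fun c hc w => hom c hc w) hsub
    (fun z => by
      have hz0 : (z : X) = 0 := (Submodule.mem_bot ℝ).1 z.2
      show (0 : (⊥ : Submodule ℝ X) →ₗ[ℝ] ℝ) z ≤ r z
      simpa [hz0] using hr0)
  have hgle : ∀ w, g w ≤ μ * ‖w‖ := fun w => ((hg w).trans (hrleq w)).trans (hqub w)
  have habs : ∀ w, |g w| ≤ μ * ‖w‖ := by
    intro w
    rw [abs_le]
    refine ⟨?_, hgle w⟩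
    have h1 := hgle (-w)
    rw [map_neg, norm_neg] at h1
    linarith
  set gc : X →L[ℝ] ℝ := LinearMap.mkContinuous g μ
    (fun w => by rw [Real.norm_eq_abs]; exact habs w) with hgcdef
  have hgc_app : ∀ w, gc w = g w := fun w => rfl
  have hnorm : ‖gc‖ ≤ μ := LinearMap.mkContinuous_norm_le g hμ.le _
  refine ⟨gc, ?_, hnorm⟩
  intro u
  have hkey : ∀ w, f (y + w) ≠ ⊤ → gc w ≤ gplus (y + w) - Fy := by
    intro w hw
    have h1 : g w ≤ q w := (hg w).trans (hrleq w)
    have h2 := hqle w w hw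
    rw [dist_self, mul_zero, add_zero] at h2
    rw [hgc_app]
    linarith
  rcases eq_or_ne (f u) ⊤ with htop | htop
  · rw [htop, hfy_eq, EReal.top_sub_coe]
    exact le_top
  · set ru : ℝ := (f u).toReal with hrudef
    have hfu_eq : f u = (ru : EReal) := (EReal.coe_toReal htop (hbot u)).symm
    suffices h : gc (u - y) ≤ ru - Fy by
      rw [hfu_eq, hfy_eq, ← EReal.coe_sub]
      exact_mod_cast h
    have hyuy : y + (u - y) = u := by abel
    rcases le_or_gt 0 ru with hru | hru
    · have h1 := hkey (u - y) (by rw [hyuy]; exact htop)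
      rw [hyuy] at h1
      have hmx : gplus u = ru := max_eq_left hru
      rwa [hmx] at h1
    · set ts : ℝ := Fy / (Fy - ru) with htsdef
      have hFr : (0:ℝ) < Fy - ru := by linarith
      have hFrne : Fy - ru ≠ 0 := hFr.ne'
      have hts0 : 0 < ts := div_pos hFypos hFr
      have hts1 : ts ≤ 1 := by
        rw [htsdef, div_le_one hFr]
        linarith
      have heq : y + ts • (u - y) = ts • u + (1 - ts) • y := by module
      have hcv := hconv u y ts hts0.le hts1
      rw [hfu_eq, hfy_eq, ← heq] at hcv
      have hval : (ts : EReal) * ((ru : ℝ) : EReal) + ((1 - ts : ℝ) : EReal) * ((Fy : ℝ) : EReal)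
          = ((ts * ru + (1 - ts) * Fy : ℝ) : EReal) := by norm_cast
      have hzero : ts * ru + (1 - ts) * Fy = 0 := by
        rw [htsdef]
        field_simp
        ring
      rw [hval, hzero] at hcv
      have hne : f (y + ts • (u - y)) ≠ ⊤ := ne_top_of_le_ne_top (EReal.coe_ne_top 0) hcv
      have hgp0 : gplus (y + ts • (u - y)) = 0 := by
        have h1 : (f (y + ts • (u - y))).toReal ≤ 0 := by
          have := EReal.toReal_le_toReal hcv (hbot _) (EReal.coe_ne_top _)
          rwa [EReal.toReal_coe] at this
        exact max_eq_right h1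
      have h2 := hkey (ts • (u - y)) hne
      rw [hgp0, map_smul, smul_eq_mul] at h2
      have h3 : ts * (ru - Fy) = -Fy := by
        rw [htsdef]
        field_simp
        ring
      have h4 : ts * gc (u - y) ≤ ts * (ru - Fy) := by
        rw [h3]; linarith
      exact le_of_mul_le_mul_left h4 hts0

/-- convex case of Theorem 3.2: if `d(0,∂f(x)) ≥ τ` for all
`x ∈ B_δ(x̄)` with `f(x) > 0` and `f(x) < τ d(x,[f≤0])`, then for every
`α ∈ (0,1]` and `x ∈ B_{δ/(1+α)}(x̄)`, `α τ d(x,[f≤0]) ≤ f₊(x)`.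
Here `δ ∈ (0,∞]`. -/
theorem stmt_17 {X : Type*} [NormedAddCommGroup X] [NormedSpace ℝ X] [CompleteSpace X]
    (f : X → EReal) (hbot : ∀ u, f u ≠ ⊥) (hconv : EConvexOn f)
    (hlsc : LowerSemicontinuous f)
    (xbar : X) (hxbar : f xbar ≤ 0) (τ : ℝ) (hτ : 0 < τ)
    (δ : ℝ≥0∞) (hδ : 0 < δ)
    (h : ∀ x : X, edist x xbar < δ → 0 < f x →
      f x < ((ENNReal.ofReal τ * EMetric.infEdist x {v | f v ≤ 0} : ℝ≥0∞) : EReal) →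
      ENNReal.ofReal τ ≤ dSub f x) :
    ∀ α : ℝ, 0 < α → α ≤ 1 → ∀ x : X,
      edist x xbar < δ / (1 + ENNReal.ofReal α) →
      ENNReal.ofReal (α * τ) * EMetric.infEdist x {v | f v ≤ 0} ≤ (f x).toENN := by
  intro α hα hα1 x hx
  set S := {v : X | f v ≤ 0} with hSdef
  rcases eq_or_ne (f x) ⊤ with htop | htop
  · rw [htop]
    have : (⊤ : EReal).toENN = ⊤ := by simp [EReal.toENN]
    rw [this]
    exact le_top
  rcases le_or_gt (f x) 0 with hneg | hpos
  · have hxS : x ∈ S := hneg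
    rw [show infEdist x S = 0 from infEdist_zero_of_mem hxS, mul_zero]
    exact zero_le
  set F : ℝ := (f x).toReal with hFdef
  have hfx_eq : f x = (F : EReal) := (EReal.coe_toReal htop (hbot x)).symm
  have hF : 0 < F := by
    rw [hfx_eq] at hpos
    exact_mod_cast hpos
  by_contra hcon
  push_neg at hcon
  have hENC : (f x).toENN = ENNReal.ofReal F := toENN_of_ne_top' htop
  set d' := EMetric.infEdist x S with hd'def
  have hxbarS : xbar ∈ S := hxbar
  have hble : d' ≤ edist x xbar := infEdist_le_edist_of_mem hxbarS
  have hbtop : edist x xbar ≠ ⊤ := hx.ne_top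
  have hd'top : d' ≠ ⊤ := ne_top_of_le_ne_top hbtop hble
  set d : ℝ := d'.toReal with hddef
  set B : ℝ := (edist x xbar).toReal with hBdef
  have hd'eq : d' = ENNReal.ofReal d := (ENNReal.ofReal_toReal hd'top).symm
  have hbeq : edist x xbar = ENNReal.ofReal B := (ENNReal.ofReal_toReal hbtop).symm
  have hdB : d ≤ B := ENNReal.toReal_mono hbtop hble
  have hd'0 : d' ≠ 0 := by
    intro h0
    rw [h0, mul_zero] at hcon
    exact (not_lt.2 zero_le) hcon
  have hd0 : 0 < d := ENNReal.toReal_pos hd'0 hd'top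
  have hcon' : F < α * τ * d := by
    rw [hENC, hd'eq, ← ENNReal.ofReal_mul (by positivity)] at hcon
    exact (ENNReal.ofReal_lt_ofReal_iff_of_nonneg hF.le).1 hcon
  have hFτd : F / τ < d := by
    rw [div_lt_iff₀ hτ]
    nlinarith
  have hFταB : F / τ < α * B := by
    rw [div_lt_iff₀ hτ]
    nlinarith
  set lam : ℝ := (F / τ + min d (α * B)) / 2 with hlamdef
  have hmin2 : F / τ < min d (α * B) := lt_min hFτd hFταB
  have hlam1 : F / τ < lam := by
    rw [hlamdef]; linarith
  have hlam2 : lam < d := by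
    have := min_le_left d (α * B)
    rw [hlamdef]; linarith
  have hlam3 : lam ≤ α * B := by
    have := min_le_right d (α * B)
    rw [hlamdef]; linarith
  have hlam0 : 0 < lam := lt_trans (by positivity) hlam1
  set μ : ℝ := F / lam with hμdef
  have hμ0 : 0 < μ := div_pos hF hlam0
  have hμτ : μ < τ := by
    rw [hμdef, div_lt_iff₀ hlam0]
    have := (div_lt_iff₀ hτ).1 hlam1
    nlinarith
  have hμlam : μ * lam = F := by
    rw [hμdef]
    field_simp
  obtain ⟨y, hy1, hy2⟩ := evp (fun u => (f u).toENN) (lsc_toENN hlsc) x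
    (by show (f x).toENN ≠ ⊤; rw [hENC]; exact ENNReal.ofReal_ne_top) (ENNReal.ofReal μ)
    (ENNReal.ofReal_pos.2 hμ0).ne' ENNReal.ofReal_ne_top
  have hy1' : (f y).toENN + ENNReal.ofReal μ * edist y x ≤ (f x).toENN := hy1
  have hy2' : ∀ u, (f y).toENN ≤ (f u).toENN + ENNReal.ofReal μ * edist u y := hy2
  have hfy_le : (f y).toENN ≤ ENNReal.ofReal F := by
    rw [← hENC]
    exact le_trans le_self_add hy1'
  have hfytop : f y ≠ ⊤ := by
    intro h0
    rw [h0] at hfy_le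
    have : (⊤ : EReal).toENN = ⊤ := by simp [EReal.toENN]
    rw [this] at hfy_le
    exact ENNReal.ofReal_ne_top (top_le_iff.1 hfy_le)
  have hedist_yx : edist y x ≤ ENNReal.ofReal lam := by
    have h1 : ENNReal.ofReal μ * edist y x ≤ ENNReal.ofReal F := by
      rw [← hENC]
      exact le_trans le_add_self hy1'
    rw [← hμlam, ENNReal.ofReal_mul hμ0.le] at h1
    exact (ENNReal.mul_le_mul_iff_right (ENNReal.ofReal_pos.2 hμ0).ne' ENNReal.ofReal_ne_top).1 h1
  have hyS : 0 < f y := by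
    by_contra hle
    push_neg at hle
    have h1 : d' ≤ edist x y := infEdist_le_edist_of_mem (show y ∈ S from hle)
    have h2 : d' ≤ ENNReal.ofReal lam := by
      rw [edist_comm] at h1
      exact le_trans h1 hedist_yx
    rw [hd'eq] at h2
    have := (ENNReal.ofReal_le_ofReal_iff hlam0.le).1 h2
    linarith
  set Fy : ℝ := (f y).toReal with hFydef
  have hfyENN : (f y).toENN = ENNReal.ofReal Fy := toENN_of_ne_top' hfytop
  have hfy_eq : f y = (Fy : EReal) := (EReal.coe_toReal hfytop (hbot y)).symm
  have hFy0 : 0 < Fy := by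
    rw [hfy_eq] at hyS
    exact_mod_cast hyS
  set t0 : ℝ := (edist y x).toReal with ht0def
  have ht0top : edist y x ≠ ⊤ := ne_top_of_le_ne_top ENNReal.ofReal_ne_top hedist_yx
  have hyxeq : edist y x = ENNReal.ofReal t0 := (ENNReal.ofReal_toReal ht0top).symm
  have ht0lam : t0 ≤ lam := ENNReal.toReal_le_of_le_ofReal hlam0.le hedist_yx
  have ht00 : 0 ≤ t0 := ENNReal.toReal_nonneg
  have hkey1 : Fy + μ * t0 ≤ F := by
    have h1 := hy1'
    rw [hENC, hfyENN, hyxeq, ← ENNReal.ofReal_mul hμ0.le,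
      ← ENNReal.ofReal_add hFy0.le (by positivity)] at h1
    exact (ENNReal.ofReal_le_ofReal_iff hF.le).1 h1
  -- y is in the ball of radius δ
  have hyxbar : edist y xbar < δ := by
    have h1 : edist y xbar ≤ edist y x + edist x xbar := edist_triangle _ _ _
    have h2 : edist y x + edist x xbar ≤ ENNReal.ofReal (α * B) + ENNReal.ofReal B := by
      rw [hbeq]
      exact add_le_add (le_trans hedist_yx (ENNReal.ofReal_le_ofReal hlam3)) le_rfl
    have h4 : (ENNReal.ofReal (α * B) + ENNReal.ofReal B : ℝ≥0∞)
        = (1 + ENNReal.ofReal α) * ENNReal.ofReal B := by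
      rw [add_mul, one_mul, ← ENNReal.ofReal_mul hα.le, add_comm]
    have h5 : (1 + ENNReal.ofReal α) * ENNReal.ofReal B < δ := by
      rw [← hbeq]
      exact ENNReal.mul_lt_of_lt_div' hx
    calc edist y xbar ≤ edist y x + edist x xbar := h1
      _ ≤ ENNReal.ofReal (α * B) + ENNReal.ofReal B := h2
      _ = (1 + ENNReal.ofReal α) * ENNReal.ofReal B := h4
      _ < δ := h5
  -- f y < τ * d(y, S)
  have hdyS : ENNReal.ofReal (d - t0) ≤ EMetric.infEdist y S := by
    have h1 : d' ≤ EMetric.infEdist y S + edist x y := infEdist_le_infEdist_add_edist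
    have h2 : d' - edist x y ≤ EMetric.infEdist y S := tsub_le_iff_right.2 h1
    refine le_trans (le_of_eq ?_) h2
    rw [hd'eq, edist_comm x y, hyxeq, ENNReal.ofReal_sub _ ht00]
  have hfy_lt : f y < ((ENNReal.ofReal τ * EMetric.infEdist y S : ℝ≥0∞) : EReal) := by
    have hreal : Fy < τ * (d - t0) := by
      nlinarith [mul_le_mul_of_nonneg_left ht0lam (by linarith : (0:ℝ) ≤ τ - μ)]
    have h2 : ENNReal.ofReal Fy < ENNReal.ofReal τ * EMetric.infEdist y S := by
      calc ENNReal.ofReal Fy < ENNReal.ofReal (τ * (d - t0)) :=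
            (ENNReal.ofReal_lt_ofReal_iff_of_nonneg hFy0.le).2 hreal
        _ = ENNReal.ofReal τ * ENNReal.ofReal (d - t0) := ENNReal.ofReal_mul hτ.le
        _ ≤ ENNReal.ofReal τ * EMetric.infEdist y S := by gcongr
    rw [hfy_eq]
    calc ((Fy : ℝ) : EReal) = ((ENNReal.ofReal Fy : ℝ≥0∞) : EReal) := by
          rw [EReal.coe_ennreal_ofReal, max_eq_left hFy0.le]
      _ < ((ENNReal.ofReal τ * EMetric.infEdist y S : ℝ≥0∞) : EReal) :=
          EReal.coe_ennreal_lt_coe_ennreal_iff.2 h2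
  have hτle := h y hyxbar hyS hfy_lt
  obtain ⟨gc, hgmem, hgnorm⟩ := exists_subgrad f hbot hconv y hfytop hyS μ hμ0 hy2'
  have hd1 : dSub f y ≤ ENNReal.ofReal ‖gc‖ := iInf₂_le gc hgmem
  have h6 : ENNReal.ofReal τ ≤ ENNReal.ofReal μ :=
    le_trans hτle (hd1.trans (ENNReal.ofReal_le_ofReal hgnorm))
  have h7 : τ ≤ μ := (ENNReal.ofReal_le_ofReal_iff hμ0.le).1 h6
  linarith
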